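/- Under the field setup (x_{i,j} càdlàg, x_{i,j}(0)=0, x_{i,j} non-decreasing for i≠j, x_{i,i} with no negative jumps), fix ρ⃗ ∈ ℝ₊^m \ {0} and let T(y) ∈ ℝ₊^m be the component-wise minimal solution of xᵢ(t⃗−) = −ρᵢ y for all i. Then for each i ∈ [m] and every t < Tᵢ(y), the running infimum satisfies inf_{r ≤ t} x_{i,i}(r) > inf_{r ≤ Tᵢ(y)} x_{i,i}(r). -/

import Mathlib

open Set Function Filter

/-- Left limit of a càdlàg function, with convention `f(0−) = f(0)`. -/
noncomputable def llE (f : ℝ → ℝ) (u : ℝ) : ℝ :=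
  if u ≤ 0 then f 0 else Function.leftLim f u

/-- Càdlàg on `[0,∞)`: right-continuous, with left limits. -/
def Cadlag (f : ℝ → ℝ) : Prop :=
  (∀ t : ℝ, 0 ≤ t → ContinuousWithinAt f (Set.Ici t) t) ∧
  (∀ t : ℝ, 0 < t →
    Filter.Tendsto f (nhdsWithin t (Set.Iio t)) (nhds (Function.leftLim f t)))

/-- The field setup: `x i j` càdlàg with `x i j 0 = 0`, `x i j` non-decreasing on
`[0,∞)` for `i ≠ j`, and `x i i` without negative jumps. -/
def FieldSetup (m : ℕ) (x : Fin m → Fin m → ℝ → ℝ) : Prop :=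
  ∀ i j : Fin m,
    Cadlag (x i j) ∧ x i j 0 = 0 ∧
    (i ≠ j → MonotoneOn (x i j) (Set.Ici 0)) ∧
    (i = j → ∀ t : ℝ, 0 < t → Function.leftLim (x i j) t ≤ x i j t)

lemma cadlag_bddBelow {f : ℝ → ℝ} (hf : Cadlag f) (B : ℝ) :
    BddBelow (f '' Icc 0 B) := by
  rcases lt_or_ge B 0 with hB | hB
  · rw [Icc_eq_empty (by linarith)]; simp
  set S : Set ℝ := {u | u ∈ Icc 0 B ∧ BddBelow (f '' Icc 0 u)} with hS
  have h0 : (0:ℝ) ∈ S := by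
    refine ⟨⟨le_refl _, hB⟩, ?_⟩
    rw [Icc_self]; exact (Set.finite_singleton 0).image f |>.bddBelow
  have hne : S.Nonempty := ⟨0, h0⟩
  have hbdd : BddAbove S := ⟨B, fun u hu => hu.1.2⟩
  set σ := sSup S with hσ
  have hσ0 : 0 ≤ σ := le_csSup hbdd h0
  have hσB : σ ≤ B := csSup_le hne (fun u hu => hu.1.2)
  -- Step A : BddBelow (f '' Icc 0 σ)
  have stepA : BddBelow (f '' Icc 0 σ) := by
    rcases eq_or_lt_of_le hσ0 with h | hpos
    · rw [← h, Icc_self]; exact (Set.finite_singleton 0).image f |>.bddBelow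
    · have hl := hf.2 σ hpos
      have hev : {w | Function.leftLim f σ - 1 < f w} ∈ nhdsWithin σ (Iio σ) :=
        hl (Ioi_mem_nhds (by linarith))
      rcases mem_nhdsLT_iff_exists_Ioo_subset.mp hev with ⟨a, ha, hsub⟩
      have haσ : a < σ := ha
      rcases exists_lt_of_lt_csSup hne (show max a 0 < σ by
        simp only [max_lt_iff]; exact ⟨haσ, hpos⟩) with ⟨u₀, hu₀S, hu₀⟩
      obtain ⟨lb, hlb⟩ := hu₀S.2
      refine ⟨min lb (min (Function.leftLim f σ - 1) (f σ)), ?_⟩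
      rintro v ⟨w, ⟨hw0, hwσ⟩, rfl⟩
      rcases le_or_gt w u₀ with h1 | h1
      · exact le_trans (min_le_left _ _) (hlb ⟨w, ⟨hw0, h1⟩, rfl⟩)
      · rcases eq_or_lt_of_le hwσ with h2 | h2
        · subst h2; exact le_trans (min_le_right _ _) (min_le_right _ _)
        · have hw : w ∈ Ioo a σ := ⟨lt_of_le_of_lt (le_max_left a 0) (hu₀.trans h1), h2⟩
          have := hsub hw
          exact le_trans (min_le_right _ _) (le_trans (min_le_left _ _) this.le)
  -- Step B : σ = B
  rcases eq_or_lt_of_le hσB with h | hσltB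
  · rwa [h] at stepA
  · exfalso
    have hrc := hf.1 σ hσ0
    have hev : {w | f σ - 1 < f w} ∈ nhdsWithin σ (Ici σ) :=
      hrc (Ioi_mem_nhds (by linarith))
    rcases mem_nhdsGE_iff_exists_Ico_subset.mp hev with ⟨u', hu', hsub⟩
    have hu'σ : σ < u' := hu'
    set u₁ := min ((σ + u')/2) B with hu₁
    have hσu₁ : σ < u₁ := lt_min (by linarith) hσltB
    have hu₁u' : u₁ < u' := lt_of_le_of_lt (min_le_left _ _) (by linarith)
    have hu₁S : u₁ ∈ S := by
      refine ⟨⟨by linarith, min_le_right _ _⟩, ?_⟩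
      obtain ⟨lb, hlb⟩ := stepA
      refine ⟨min lb (f σ - 1), ?_⟩
      rintro v ⟨w, ⟨hw0, hwu₁⟩, rfl⟩
      rcases le_or_gt w σ with h1 | h1
      · exact le_trans (min_le_left _ _) (hlb ⟨w, ⟨hw0, h1⟩, rfl⟩)
      · have : w ∈ Ico σ u' := ⟨h1.le, lt_of_le_of_lt hwu₁ hu₁u'⟩
        exact le_trans (min_le_right _ _) (hsub this).le
    exact absurd (le_csSup hbdd hu₁S) (not_le.mpr hσu₁)

lemma le_leftLim_of {f : ℝ → ℝ} (hf : Cadlag f) {u a C : ℝ} (hu : 0 < u) (ha : a < u)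
    (h : ∀ w ∈ Ioo a u, C ≤ f w) : C ≤ Function.leftLim f u := by
  refine ge_of_tendsto (hf.2 u hu) ?_
  filter_upwards [Ioo_mem_nhdsLT_of_mem (⟨ha, le_refl u⟩ : u ∈ Ioc a u)] using h

lemma leftLim_le_of {f : ℝ → ℝ} (hf : Cadlag f) {u a C : ℝ} (hu : 0 < u) (ha : a < u)
    (h : ∀ w ∈ Ioo a u, f w ≤ C) : Function.leftLim f u ≤ C := by
  refine le_of_tendsto (hf.2 u hu) ?_
  filter_upwards [Ioo_mem_nhdsLT_of_mem (⟨ha, le_refl u⟩ : u ∈ Ioc a u)] using h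

lemma llE_of_pos {f : ℝ → ℝ} {u : ℝ} (hu : 0 < u) : llE f u = Function.leftLim f u := by
  simp [llE, not_le.mpr hu]

lemma llE_of_nonpos {f : ℝ → ℝ} {u : ℝ} (hu : u ≤ 0) : llE f u = f 0 := by
  simp [llE, hu]

lemma llE_nonneg {f : ℝ → ℝ} (hf : Cadlag f) (hf0 : f 0 = 0)
    (hmono : MonotoneOn f (Ici 0)) {u : ℝ} : 0 ≤ llE f u := by
  rcases le_or_gt u 0 with h | h
  · rw [llE_of_nonpos h, hf0]
  · rw [llE_of_pos h]
    refine le_leftLim_of hf h (show (0:ℝ) < u from h) ?_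
    intro w hw
    rw [← hf0]; exact hmono (le_refl (0:ℝ)) hw.1.le hw.1.le

lemma llE_mono {f : ℝ → ℝ} (hf : Cadlag f) (hf0 : f 0 = 0)
    (hmono : MonotoneOn f (Ici 0)) {a b : ℝ} (hab : a ≤ b) : llE f a ≤ llE f b := by
  rcases le_or_gt b 0 with hb | hb
  · rw [llE_of_nonpos hb, llE_of_nonpos (hab.trans hb)]
  · rw [llE_of_pos hb]
    rcases le_or_gt a 0 with ha | ha
    · rw [llE_of_nonpos ha, hf0]
      refine le_leftLim_of hf hb (show (0:ℝ) < b from hb) ?_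
      intro w hw; rw [← hf0]; exact hmono (le_refl (0:ℝ)) hw.1.le hw.1.le
    · rw [llE_of_pos ha]
      rcases eq_or_lt_of_le hab with h | h
      · rw [h]
      · have h1 : Function.leftLim f a ≤ f a := by
          refine leftLim_le_of hf ha (show (0:ℝ) < a from ha) ?_
          intro w hw; exact hmono hw.1.le ha.le hw.2.le
        have h2 : f a ≤ Function.leftLim f b := by
          refine le_leftLim_of hf hb h ?_
          intro w hw; exact hmono ha.le (ha.trans hw.1).le hw.1.le
        exact h1.trans h2

lemma llE_le_self {f : ℝ → ℝ} (hf : Cadlag f)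
    (hnn : ∀ u : ℝ, 0 < u → Function.leftLim f u ≤ f u) {u : ℝ} (hu : 0 ≤ u) :
    llE f u ≤ f u := by
  rcases eq_or_lt_of_le hu with h | h
  · rw [llE_of_nonpos h.symm.le, ← h]
  · rw [llE_of_pos h]; exact hnn u h


lemma sInf_Icc_le_llE {f : ℝ → ℝ} (hf : Cadlag f) {u : ℝ} (hu : 0 ≤ u) :
    sInf (f '' Icc 0 u) ≤ llE f u := by
  rcases eq_or_lt_of_le hu with h | h
  · rw [llE_of_nonpos h.symm.le, ← h, Icc_self, image_singleton, csInf_singleton]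
  · rw [llE_of_pos h]
    refine le_leftLim_of hf h (show (0:ℝ) < u from h) ?_
    intro w hw
    exact csInf_le (cadlag_bddBelow hf u) ⟨w, ⟨hw.1.le, hw.2.le⟩, rfl⟩

lemma llE_right_approx {f : ℝ → ℝ} (hf : Cadlag f)
    (hnn : ∀ u : ℝ, 0 < u → Function.leftLim f u ≤ f u) {u ε : ℝ} (hu : 0 ≤ u)
    (hε : 0 < ε) : ∃ δ > 0, ∀ v, u ≤ v → v < u + δ → llE f u ≤ llE f v + ε := by
  have hrc := hf.1 u hu
  have hev : {w | f u - ε < f w} ∈ nhdsWithin u (Ici u) :=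
    hrc (Ioi_mem_nhds (by linarith))
  rcases mem_nhdsGE_iff_exists_Ico_subset.mp hev with ⟨u', hu', hsub⟩
  have huu' : u < u' := hu'
  refine ⟨u' - u, by linarith, fun v hv1 hv2 => ?_⟩
  rcases eq_or_lt_of_le hv1 with h | h
  · rw [← h]; linarith
  · have hvpos : 0 < v := lt_of_le_of_lt hu h
    rw [llE_of_pos hvpos]
    have h1 : f u - ε ≤ Function.leftLim f v := by
      refine le_leftLim_of hf hvpos h ?_
      intro w hw
      exact (hsub ⟨hw.1.le, lt_of_lt_of_le hw.2 (by linarith)⟩).le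
    have h2 : llE f u ≤ f u := llE_le_self hf hnn hu
    linarith

lemma first_passage {f : ℝ → ℝ} (hf : Cadlag f) (hf0 : f 0 = 0)
    (hnn : ∀ u : ℝ, 0 < u → Function.leftLim f u ≤ f u) {t b : ℝ} (ht : 0 ≤ t)
    (hb : b ≤ 0) (hinf : sInf (f '' Icc 0 t) ≤ b) :
    ∃ τ, 0 ≤ τ ∧ τ ≤ t ∧ llE f τ = b := by
  set m : ℝ → ℝ := fun u => sInf (f '' Icc 0 u) with hm
  set U : Set ℝ := {u | u ∈ Icc 0 t ∧ m u ≤ b} with hU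
  have htU : t ∈ U := ⟨⟨ht, le_refl t⟩, hinf⟩
  have hUne : U.Nonempty := ⟨t, htU⟩
  have hUbdd : BddBelow U := ⟨0, fun u hu => hu.1.1⟩
  set τ := sInf U with hτ
  have hτ0 : 0 ≤ τ := le_csInf hUne (fun u hu => hu.1.1)
  have hτt : τ ≤ t := csInf_le hUbdd htU
  have hmem : ∀ u : ℝ, 0 ≤ u → f u ∈ f '' Icc 0 u := fun u hu => ⟨u, ⟨hu, le_refl u⟩, rfl⟩
  have hnotU : ∀ u : ℝ, 0 ≤ u → u < τ → b < m u := by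
    intro u hu huτ
    by_contra hc
    push_neg at hc
    exact absurd (csInf_le hUbdd ⟨⟨hu, huτ.le.trans hτt⟩, hc⟩) (not_le.mpr huτ)
  have step1 : ∀ u : ℝ, 0 ≤ u → u < τ → b < f u := by
    intro u hu huτ
    exact lt_of_lt_of_le (hnotU u hu huτ) (csInf_le (cadlag_bddBelow hf u) (hmem u hu))
  have step2 : m τ ≤ b := by
    by_contra hc
    push_neg at hc
    have hfτ : m τ ≤ f τ := csInf_le (cadlag_bddBelow hf τ) (hmem τ hτ0)
    have hev : {w | f τ - (m τ - b)/2 < f w} ∈ nhdsWithin τ (Ici τ) :=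
      (hf.1 τ hτ0) (Ioi_mem_nhds (by linarith))
    rcases mem_nhdsGE_iff_exists_Ico_subset.mp hev with ⟨u', hu', hsub⟩
    have hτu' : τ < u' := hu'
    rcases exists_lt_of_csInf_lt hUne (show sInf U < u' from lt_of_le_of_lt (le_refl τ) hτu') with
      ⟨u, huU, huu'⟩
    have hτu : τ ≤ u := csInf_le hUbdd huU
    have hmu : m u ≤ b := huU.2
    have hlow : (m τ + b)/2 ≤ m u := by
      refine le_csInf ⟨f 0, hmem 0 (le_refl 0) |>.imp (fun w hw => ⟨⟨hw.1.1, hw.1.2.trans (hτ0.trans hτu)⟩, hw.2⟩)⟩ ?_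
      rintro v ⟨w, ⟨hw0, hwu⟩, rfl⟩
      rcases le_or_gt w τ with h1 | h1
      · have := csInf_le (cadlag_bddBelow hf τ) (⟨w, ⟨hw0, h1⟩, rfl⟩ : f w ∈ f '' Icc 0 τ)
        linarith
      · have hw' : w ∈ Ico τ u' := ⟨h1.le, lt_of_le_of_lt hwu huu'⟩
        have := hsub hw'
        simp only [mem_setOf_eq] at this
        linarith
    linarith
  rcases eq_or_lt_of_le hτ0 with hτpos | hτpos
  · -- τ = 0
    refine ⟨0, le_refl 0, ht, ?_⟩
    have hm0 : m 0 = 0 := by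
      simp only [hm, Icc_self, image_singleton, csInf_singleton, hf0]
    rw [← hτpos] at step2
    rw [llE_of_nonpos (le_refl 0), hf0]
    linarith [hm0 ▸ step2]
  · refine ⟨τ, hτ0, hτt, ?_⟩
    rw [llE_of_pos hτpos]
    have hge : b ≤ Function.leftLim f τ := by
      refine le_leftLim_of hf hτpos hτpos ?_
      intro w hw; exact (step1 w hw.1.le hw.2).le
    rcases eq_or_lt_of_le hge with h | hL
    · exact h.symm
    · exfalso
      set L := Function.leftLim f τ with hLdef
      have hev : {w | (L + b)/2 < f w} ∈ nhdsWithin τ (Iio τ) :=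
        (hf.2 τ hτpos) (Ioi_mem_nhds (by linarith))
      rcases mem_nhdsLT_iff_exists_Ioo_subset.mp hev with ⟨a, ha, hsub⟩
      have haτ : a < τ := ha
      set v₀ := max a 0 with hv₀
      have hv₀τ : v₀ < τ := by
        simp only [hv₀, max_lt_iff]; exact ⟨haτ, hτpos⟩
      have hv₀0 : 0 ≤ v₀ := le_max_right a 0
      have hmv₀ : b < m v₀ := hnotU v₀ hv₀0 hv₀τ
      have hfτL : L ≤ f τ := hnn τ hτpos
      have hlow : min (m v₀) ((L + b)/2) ≤ m τ := by
        refine le_csInf ⟨f 0, (hmem 0 (le_refl 0)).imp (fun w hw => ⟨⟨hw.1.1, hw.1.2.trans hτ0⟩, hw.2⟩)⟩ ?_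
        rintro v ⟨w, ⟨hw0, hwτ⟩, rfl⟩
        rcases le_or_gt w v₀ with h1 | h1
        · exact le_trans (min_le_left _ _) (csInf_le (cadlag_bddBelow hf v₀) ⟨w, ⟨hw0, h1⟩, rfl⟩)
        · rcases eq_or_lt_of_le hwτ with h2 | h2
          · subst h2; refine le_trans (min_le_right _ _) (by linarith)
          · have hw' : w ∈ Ioo a τ := ⟨lt_of_le_of_lt (le_max_left a 0) h1, h2⟩
            exact le_trans (min_le_right _ _) (hsub hw').le
      have : b < m τ := lt_of_lt_of_le (lt_min hmv₀ (by linarith)) hlow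
      linarith

/-- `t` is a (finite, nonnegative) solution of `x(t−) = −ρ y`, i.e.
`Σⱼ x_{i,j}(tⱼ−) = −ρᵢ y` for every `i`. -/
def IsSol (m : ℕ) (x : Fin m → Fin m → ℝ → ℝ) (ρ : Fin m → ℝ) (y : ℝ)
    (t : Fin m → ℝ) : Prop :=
  (∀ i, 0 ≤ t i) ∧ ∀ i, (∑ j, llE (x i j) (t j)) = -(ρ i * y)

/-- `T` is the component-wise minimal solution of `x(t−) = −ρ y`. -/
def IsMinSol (m : ℕ) (x : Fin m → Fin m → ℝ → ℝ) (ρ : Fin m → ℝ) (y : ℝ)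
    (T : Fin m → ℝ) : Prop :=
  IsSol m x ρ y T ∧ ∀ t : Fin m → ℝ, IsSol m x ρ y t → ∀ i, T i ≤ t i

/-- For each `i` and every `t < Tᵢ(y)`, the running infimum of `x_{i,i}` strictly
decreases: `inf_{r ≤ t} x_{i,i}(r) > inf_{r ≤ Tᵢ(y)} x_{i,i}(r)`. -/

theorem stmt17 (m : ℕ) (x : Fin m → Fin m → ℝ → ℝ) (hx : FieldSetup m x)
    (ρ : Fin m → ℝ) (hρ : ∀ i, 0 ≤ ρ i) (hρ0 : ρ ≠ 0) (y : ℝ) (hy : 0 ≤ y)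
    (T : Fin m → ℝ) (hT : IsMinSol m x ρ y T) :
    ∀ i : Fin m, ∀ t : ℝ, 0 ≤ t → t < T i →
      sInf (x i i '' Set.Icc 0 (T i)) < sInf (x i i '' Set.Icc 0 t) := by
  intro i t ht htT
  by_contra hcon
  push_neg at hcon
  have hcad : ∀ k j, Cadlag (x k j) := fun k j => (hx k j).1
  have h0 : ∀ k j, x k j 0 = 0 := fun k j => (hx k j).2.1
  have hmono : ∀ k j, k ≠ j → MonotoneOn (x k j) (Set.Ici 0) :=
    fun k j h => (hx k j).2.2.1 h
  have hnnjump : ∀ k, ∀ u : ℝ, 0 < u → Function.leftLim (x k k) u ≤ x k k u :=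
    fun k => (hx k k).2.2.2 rfl
  have hll : ∀ k j, ∀ u : ℝ, 0 < u → Function.leftLim (x k j) u ≤ x k j u := by
    intro k j
    by_cases h : k = j
    · subst h; exact hnnjump k
    · intro u hu
      exact leftLim_le_of (hcad k j) hu hu
        (fun w hw => hmono k j h hw.1.le hu.le hw.2.le)
  have hTnn : ∀ j, 0 ≤ T j := hT.1.1
  have hTeq : ∀ k, (∑ j, llE (x k j) (T j)) = -(ρ k * y) := hT.1.2
  have hTi_pos : 0 < T i := lt_of_le_of_lt ht htT
  have hρy : ∀ k, 0 ≤ ρ k * y := fun k => mul_nonneg (hρ k) hy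
  -- nonnegativity of off-diagonal llE at nonneg arguments
  have hllE_nn : ∀ k j, k ≠ j → ∀ u : ℝ, 0 ≤ llE (x k j) u := by
    intro k j h u
    rcases le_or_gt u 0 with hu | hu
    · rw [llE_of_nonpos hu, h0]
    · exact llE_nonneg (hcad k j) (h0 k j) (hmono k j h)
  -- the level a at coordinate i
  set a := llE (x i i) (T i) with hadef
  have hsplit_i : llE (x i i) (T i) + ∑ j ∈ Finset.univ.erase i, llE (x i j) (T j)
      = -(ρ i * y) := by
    rw [← hTeq i]; exact Finset.add_sum_erase Finset.univ (fun j => llE (x i j) (T j)) (Finset.mem_univ i)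
  have herase_nn : ∀ (k : Fin m) (c : Fin m → ℝ),
      0 ≤ ∑ j ∈ Finset.univ.erase k, llE (x k j) (c j) := by
    intro k c
    refine Finset.sum_nonneg (fun j hj => ?_)
    exact hllE_nn k j (fun h => (Finset.mem_erase.mp hj).1 h.symm) (c j)
  have ha0 : a ≤ 0 := by
    have := herase_nn i T
    have := hρy i
    linarith [hsplit_i]
  have hstart : sInf (x i i '' Set.Icc 0 t) ≤ a :=
    hcon.trans (sInf_Icc_le_llE (hcad i i) hTi_pos.le)
  obtain ⟨τ₀, hτ₀0, hτ₀t, hτ₀eq⟩ :=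
    first_passage (hcad i i) (h0 i i) (hnnjump i) ht ha0 hstart
  -- subsolutions
  set Sub : (Fin m → ℝ) → Prop := fun s =>
    (∀ j, 0 ≤ s j) ∧ (∀ j, s j ≤ T j) ∧ s i ≤ t ∧
    ∀ k, (∑ j, llE (x k j) (s j)) ≤ -(ρ k * y) with hSubDef
  -- s⁰ = update T i τ₀ is a subsolution
  have hs0 : Sub (Function.update T i τ₀) := by
    refine ⟨?_, ?_, ?_, ?_⟩
    · intro j; rcases eq_or_ne j i with rfl | h
      · rw [Function.update_self]; exact hτ₀0
      · rw [Function.update_of_ne h]; exact hTnn j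
    · intro j; rcases eq_or_ne j i with rfl | h
      · rw [Function.update_self]; linarith
      · rw [Function.update_of_ne h]
    · rw [Function.update_self]; exact hτ₀t
    · intro k
      rw [← hTeq k]
      refine Finset.sum_le_sum (fun j _ => ?_)
      rcases eq_or_ne j i with rfl | h
      · rw [Function.update_self]
        rcases eq_or_ne k j with rfl | hk
        · rw [hτ₀eq]
        · exact llE_mono (hcad k j) (h0 k j) (hmono k j hk) (by linarith)
      · rw [Function.update_of_ne h]
  set SS : Set (Fin m → ℝ) := {s | Sub s} with hSS
  have hSSne : SS.Nonempty := ⟨_, hs0⟩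
  -- SS closed under pointwise min
  have hSSmin : ∀ s ∈ SS, ∀ s' ∈ SS, s ⊓ s' ∈ SS := by
    intro s hs s' hs'
    refine ⟨fun j => le_min (hs.1 j) (hs'.1 j), fun j => (min_le_left _ _).trans (hs.2.1 j),
      (min_le_left _ _).trans hs.2.2.1, fun k => ?_⟩
    rcases le_total (s k) (s' k) with h | h
    · refine le_trans (Finset.sum_le_sum (fun j _ => ?_)) (hs.2.2.2 k)
      rcases eq_or_ne j k with rfl | hjk
      · have : (s ⊓ s') j = s j := min_eq_left h
        rw [this]
      · exact llE_mono (hcad k j) (h0 k j) (hmono k j (Ne.symm hjk)) (min_le_left _ _)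
    · refine le_trans (Finset.sum_le_sum (fun j _ => ?_)) (hs'.2.2.2 k)
      rcases eq_or_ne j k with rfl | hjk
      · have : (s ⊓ s') j = s' j := min_eq_right h
        rw [this]
      · exact llE_mono (hcad k j) (h0 k j) (hmono k j (Ne.symm hjk)) (min_le_right _ _)
  -- componentwise infimum
  set c : Fin m → ℝ := fun j => sInf ((fun s => s j) '' SS) with hcdef
  have himgne : ∀ j, ((fun s : Fin m → ℝ => s j) '' SS).Nonempty :=
    fun j => hSSne.image _
  have himgbdd : ∀ j, BddBelow ((fun s : Fin m → ℝ => s j) '' SS) := by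
    intro j; exact ⟨0, by rintro v ⟨s, hs, rfl⟩; exact hs.1 j⟩
  have hc_le : ∀ s ∈ SS, ∀ j, c j ≤ s j :=
    fun s hs j => csInf_le (himgbdd j) ⟨s, hs, rfl⟩
  have hc_nn : ∀ j, 0 ≤ c j :=
    fun j => le_csInf (himgne j) (by rintro v ⟨s, hs, rfl⟩; exact hs.1 j)
  have hcT : ∀ j, c j ≤ T j := fun j => (hc_le _ hs0 j).trans (hs0.2.1 j)
  have hcit : c i ≤ t := by
    have h' := hc_le _ hs0 i
    rw [Function.update_self] at h'
    exact h'.trans hτ₀t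
  have hm_pos : 0 < (m : ℝ) := by exact_mod_cast i.pos
  -- the sum inequality for c
  have hcsum : ∀ k, (∑ j, llE (x k j) (c j)) ≤ -(ρ k * y) := by
    intro k
    refine le_of_forall_pos_le_add (fun ε hε => ?_)
    have hε' : 0 < ε / m := div_pos hε hm_pos
    choose δ hδpos hδ using fun j =>
      llE_right_approx (hcad k j) (hll k j) (hc_nn j) hε'
    have hwit : ∀ j, ∃ s ∈ SS, s j < c j + δ j := by
      intro j
      obtain ⟨v, hv, hvlt⟩ := Real.lt_sInf_add_pos (himgne j) (hδpos j)
      obtain ⟨s, hs, rfl⟩ := hv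
      exact ⟨s, hs, hvlt⟩
    choose F hF hFlt using hwit
    set q := Finset.univ.inf' ⟨i, Finset.mem_univ i⟩ F with hq
    have hqSS : q ∈ SS :=
      Finset.inf'_mem SS hSSmin _ _ _ (fun j _ => hF j)
    have hqlt : ∀ j, q j < c j + δ j := by
      intro j
      exact lt_of_le_of_lt ((Finset.inf'_le F (Finset.mem_univ j) : q ≤ F j) j) (hFlt j)
    have hterm : ∀ j, llE (x k j) (c j) ≤ llE (x k j) (q j) + ε / m :=
      fun j => hδ j (q j) (hc_le q hqSS j) (hqlt j)
    calc (∑ j, llE (x k j) (c j)) ≤ ∑ j, (llE (x k j) (q j) + ε / m) :=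
          Finset.sum_le_sum (fun j _ => hterm j)
      _ = (∑ j, llE (x k j) (q j)) + m * (ε / m) := by
          rw [Finset.sum_add_distrib, Finset.sum_const, Finset.card_univ, Fintype.card_fin,
            nsmul_eq_mul]
      _ ≤ -(ρ k * y) + ε := by
          have h1 : (∑ j, llE (x k j) (q j)) ≤ -(ρ k * y) := hqSS.2.2.2 k
          have h2 : (m : ℝ) * (ε / m) = ε := by field_simp
          linarith
  -- exactness of c
  have hexact : ∀ k, (∑ j, llE (x k j) (c j)) = -(ρ k * y) := by
    intro k
    rcases eq_or_lt_of_le (hcsum k) with h | hlt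
    · exact h
    · exfalso
      set b := -(ρ k * y) - ∑ j ∈ Finset.univ.erase k, llE (x k j) (c j) with hbdef
      have hsplit : llE (x k k) (c k) + ∑ j ∈ Finset.univ.erase k, llE (x k j) (c j)
          = ∑ j, llE (x k j) (c j) :=
        Finset.add_sum_erase Finset.univ (fun j => llE (x k j) (c j)) (Finset.mem_univ k)
      have hdiag : llE (x k k) (c k) < b := by
        rw [hbdef]; linarith [hsplit]
      have hb0 : b ≤ 0 := by
        have := herase_nn k c
        have := hρy k
        rw [hbdef]; linarith
      have hminf : sInf (x k k '' Set.Icc 0 (c k)) ≤ b :=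
        le_of_lt (lt_of_le_of_lt (sInf_Icc_le_llE (hcad k k) (hc_nn k)) hdiag)
      obtain ⟨τ, hτ0, hτck, hτeq⟩ :=
        first_passage (hcad k k) (h0 k k) (hnnjump k) (hc_nn k) hb0 hminf
      have hτlt : τ < c k := by
        rcases eq_or_lt_of_le hτck with h' | h'
        · exfalso; rw [h'] at hτeq; rw [hτeq] at hdiag; exact lt_irrefl b hdiag
        · exact h'
      have hs' : Function.update c k τ ∈ SS := by
        refine ⟨?_, ?_, ?_, ?_⟩
        · intro j; rcases eq_or_ne j k with rfl | h'
          · rw [Function.update_self]; exact hτ0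
          · rw [Function.update_of_ne h']; exact hc_nn j
        · intro j; rcases eq_or_ne j k with rfl | h'
          · rw [Function.update_self]; exact hτck.trans (hcT j)
          · rw [Function.update_of_ne h']; exact hcT j
        · rcases eq_or_ne i k with rfl | h'
          · rw [Function.update_self]; exact hτck.trans hcit
          · rw [Function.update_of_ne h']; exact hcit
        · intro l
          rcases eq_or_ne l k with rfl | hlk
          · have hfun : (fun j => llE (x l j) (Function.update c l τ j))
                = Function.update (fun j => llE (x l j) (c j)) l (llE (x l l) τ) := by
              funext j
              rcases eq_or_ne j l with rfl | h'
              · rw [Function.update_self, Function.update_self]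
              · rw [Function.update_of_ne h', Function.update_of_ne h']
            calc (∑ j, llE (x l j) (Function.update c l τ j))
                = ∑ j, Function.update (fun j => llE (x l j) (c j)) l (llE (x l l) τ) j := by
                  rw [hfun]
              _ = llE (x l l) τ + ∑ j ∈ Finset.univ.erase l, llE (x l j) (c j) := by
                  rw [Finset.sum_update_of_mem (Finset.mem_univ l)]
                  rw [Finset.sdiff_singleton_eq_erase]
              _ = -(ρ l * y) := by rw [hτeq, hbdef]; ring
              _ ≤ -(ρ l * y) := le_refl _
          · refine le_trans (Finset.sum_le_sum (fun j _ => ?_)) (hcsum l)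
            rcases eq_or_ne j k with rfl | h'
            · rw [Function.update_self]
              exact llE_mono (hcad l j) (h0 l j) (hmono l j hlk) hτck
            · rw [Function.update_of_ne h']
      have := hc_le _ hs' k
      rw [Function.update_self] at this
      linarith
  -- c is a solution, contradicting minimality
  have hcsol : IsSol m x ρ y c := ⟨hc_nn, hexact⟩
  have := hT.2 c hcsol i
  linarith
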